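/- arXiv:1907.06187 — 6 statements merged into one kernel-verified Lean document; each statement's English description precedes it below -/
import Mathlib

section
/- Let r, s, t be positive integers with r ≤ s ≤ t. If the complete tripartite graph K_{r,s,t} admits a 5-cycle decomposition, then: (1) r, s, and t all have the same parity; (2) 5 divides rs + rt + st; and (3) t(r + s) ≤ 4rs (i.e. t ≤ 4rs/(r+s)). -/
open SimpleGraph

/-- The complete tripartite graph `K_{a,b,c}`. -/
def completeTripartiteGraph (a b c : ℕ) :
    SimpleGraph (Σ i : Fin 3, Fin (![a, b, c] i)) :=
  completeMultipartiteGraph (fun i : Fin 3 => Fin (![a, b, c] i))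

/-- `G` decomposes into cycles whose lengths lie in `L`: there is a family of
edge sets, each the edge set of a cycle in `G` of length in `L`, which
partitions the edge set of `G`. -/
def HasCycleDecomp {V : Type*} (G : SimpleGraph V) (L : Set ℕ) : Prop :=
  ∃ D : Set (Set (Sym2 V)),
    (∀ E ∈ D, ∃ (v : V) (w : G.Walk v v),
      w.IsCycle ∧ w.length ∈ L ∧ E = {e | e ∈ w.edges}) ∧
    ⋃₀ D = G.edgeSet ∧ D.PairwiseDisjoint id

noncomputable instance (r s t : ℕ) : DecidableRel (completeTripartiteGraph r s t).Adj :=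
  Classical.decRel _

lemma fiber_card (f : Fin 3 → ℕ) (j : Fin 3) :
    (Finset.univ.filter (fun w : Σ i, Fin (f i) => w.1 = j)).card = f j := by
  classical
  rw [show (Finset.univ.filter (fun w : Σ i, Fin (f i) => w.1 = j))
      = (Finset.univ : Finset (Fin (f j))).map ⟨fun x => ⟨j, x⟩, fun a b hab => by
          simpa using hab⟩ from ?_]
  · simp
  · ext ⟨i, x⟩
    simp only [Finset.mem_filter, Finset.mem_univ, true_and, Finset.mem_map,
      Function.Embedding.coeFn_mk]
    constructor
    · rintro rfl; exact ⟨x, rfl⟩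
    · rintro ⟨a, ha⟩
      obtain ⟨rfl, _⟩ := Sigma.mk.inj_iff.mp ha
      rfl

lemma deg_eq (r s t : ℕ) (v : Σ i : Fin 3, Fin (![r, s, t] i)) :
    (completeTripartiteGraph r s t).degree v = (r + s + t) - ![r, s, t] v.1 := by
  classical
  have hcard : Fintype.card (Σ i : Fin 3, Fin (![r, s, t] i)) = r + s + t := by
    simp [Fintype.card_sigma, Fin.sum_univ_three]
  rw [← card_neighborFinset_eq_degree]
  have hnb : (completeTripartiteGraph r s t).neighborFinset v
      = Finset.univ.filter (fun w => ¬ w.1 = v.1) := by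
    ext w
    rw [mem_neighborFinset]
    simp [completeTripartiteGraph, ne_comm, eq_comm,
      completeMultipartiteGraph, SimpleGraph.comap_adj, SimpleGraph.top_adj]
  rw [hnb]
  have h2 := Finset.card_filter_add_card_filter_not
    (s := (Finset.univ : Finset (Σ i : Fin 3, Fin (![r, s, t] i))))
    (p := fun w => w.1 = v.1)
  rw [fiber_card, Finset.card_univ, hcard] at h2
  have hle : ![r, s, t] v.1 ≤ r + s + t := by
    obtain ⟨i, x⟩ := v
    fin_cases i <;> simp <;> omega
  omega

lemma partition_count {V : Type*} [Fintype V] [DecidableEq V] (G : SimpleGraph V)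
    [DecidableRel G.Adj]
    (D : Set (Set (Sym2 V))) (hU : ⋃₀ D = G.edgeSet) (hdisj : D.PairwiseDisjoint id)
    (p : Sym2 V → Prop) [DecidablePred p] :
    (G.edgeFinset.filter p).card
      = ∑ E ∈ (Set.toFinite D).toFinset, ((Set.toFinite E).toFinset.filter p).card := by
  classical
  rw [← Finset.card_biUnion]
  · congr 1
    ext e
    simp only [Finset.mem_filter, mem_edgeFinset, Finset.mem_biUnion,
      Set.Finite.mem_toFinset]
    rw [← hU]
    constructor
    · rintro ⟨⟨E, hE, heE⟩, hp⟩
      exact ⟨E, hE, heE, hp⟩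
    · rintro ⟨E, hE, heE, hp⟩
      exact ⟨⟨E, hE, heE⟩, hp⟩
  · intro E1 h1 E2 h2 hne
    rw [Finset.mem_coe, Set.Finite.mem_toFinset] at h1 h2
    have hd := hdisj h1 h2 hne
    rw [Function.onFun, Finset.disjoint_left]
    intro e he1 he2
    simp only [Finset.mem_filter, Set.Finite.mem_toFinset] at he1 he2
    exact Set.disjoint_left.mp hd he1.1 he2.1

lemma cycle_filter_card {V : Type*} [Fintype V] [DecidableEq V] {G : SimpleGraph V} {v : V}
    {w : G.Walk v v} (hc : w.IsCycle) (p : Sym2 V → Prop) [DecidablePred p] :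
    ((Set.toFinite {e | e ∈ w.edges}).toFinset.filter p).card
      = (w.edges.filter (fun e => decide (p e))).length := by
  have hnd : w.edges.Nodup := hc.isTrail.edges_nodup
  have h1 : (Set.toFinite {e | e ∈ w.edges}).toFinset = w.edges.toFinset := by
    ext e; simp
  rw [h1]
  rw [show Finset.filter p w.edges.toFinset
      = (w.edges.filter (fun e => decide (p e))).toFinset from ?_]
  · exact List.toFinset_card_of_nodup (hnd.filter _)
  · rw [List.toFinset_filter]
    simp

lemma cycle_part2_le {r s t : ℕ} {v : Σ i : Fin 3, Fin (![r, s, t] i)}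
    {w : (completeTripartiteGraph r s t).Walk v v}
    (hlen : w.length = 5)
    [DecidablePred fun e : Sym2 (Σ i : Fin 3, Fin (![r, s, t] i)) => ∃ a ∈ e, a.1 = (2 : Fin 3)] :
    (w.edges.filter (fun e => decide (∃ a ∈ e, a.1 = (2 : Fin 3)))).length ≤ 4 := by
  by_contra hcon
  push_neg at hcon
  have h5len : w.edges.length = 5 := by rw [Walk.length_edges]; exact hlen
  have hlef : (w.edges.filter (fun e => decide (∃ a ∈ e, a.1 = (2 : Fin 3)))).length
      ≤ w.edges.length := List.length_filter_le _ _
  have heq : (w.edges.filter (fun e => decide (∃ a ∈ e, a.1 = (2 : Fin 3)))) = w.edges :=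
    List.filter_sublist.eq_of_length (by omega)
  have hall : ∀ e ∈ w.edges, ∃ a ∈ e, a.1 = (2 : Fin 3) := by
    intro e he
    have := List.filter_eq_self.mp heq e he
    simpa using this
  clear hcon hlef heq h5len
  cases w with
  | nil => simp at hlen
  | cons h1 w1 => cases w1 with
    | nil => simp at hlen
    | cons h2 w2 => cases w2 with
      | nil => simp at hlen
      | cons h3 w3 => cases w3 with
        | nil => simp at hlen
        | cons h4 w4 => cases w4 with
          | nil => simp at hlen
          | cons h5 w5 => cases w5 with
            | nil =>
              simp only [Walk.edges_cons, Walk.edges_nil, List.mem_cons,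
                List.mem_singleton] at hall
              rename_i a b c d
              have p1 := hall _ (Or.inl rfl)
              have p2 := hall _ (Or.inr (Or.inl rfl))
              have p3 := hall _ (Or.inr (Or.inr (Or.inl rfl)))
              have p4 := hall _ (Or.inr (Or.inr (Or.inr (Or.inl rfl))))
              have p5 := hall _ (Or.inr (Or.inr (Or.inr (Or.inr (Or.inl rfl)))))
              simp only [Sym2.mem_iff, exists_eq_or_imp, exists_eq_left] at p1 p2 p3 p4 p5
              have q1 : v.1 ≠ a.1 := h1
              have q2 : a.1 ≠ b.1 := h2
              have q3 : b.1 ≠ c.1 := h3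
              have q4 : c.1 ≠ d.1 := h4
              have q5 : d.1 ≠ v.1 := h5
              simp only [Fin.ext_iff, ne_eq] at p1 p2 p3 p4 p5 q1 q2 q3 q4 q5
              omega
            | cons _ _ => simp at hlen

theorem stmt_3 (r s t : ℕ) (hr : 0 < r) (hs : 0 < s) (ht : 0 < t)
    (hrs : r ≤ s) (hst : s ≤ t)
    (h : HasCycleDecomp (completeTripartiteGraph r s t) {5}) :
    (r % 2 = s % 2 ∧ s % 2 = t % 2) ∧
      5 ∣ (r * s + r * t + s * t) ∧
      t * (r + s) ≤ 4 * r * s := by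
  obtain ⟨D, hcyc, hU, hdisj⟩ := h
  set G := completeTripartiteGraph r s t with hG
  set DF := (Set.toFinite D).toFinset with hDF
  have hcyc' : ∀ E ∈ DF, ∃ (v : _) (w : G.Walk v v),
      w.IsCycle ∧ w.length = 5 ∧ E = {e | e ∈ w.edges} := by
    intro E hE
    rw [hDF, Set.Finite.mem_toFinset] at hE
    obtain ⟨v, w, h1, h2, h3⟩ := hcyc E hE
    exact ⟨v, w, h1, h2, h3⟩
  have key : ∀ (p : Sym2 (Σ i : Fin 3, Fin (![r, s, t] i)) → Prop) [DecidablePred p],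
      (G.edgeFinset.filter p).card
        = ∑ E ∈ DF, ((Set.toFinite E).toFinset.filter p).card := by
    intro p hp
    exact partition_count G D hU hdisj p
  have hdegsum : ∑ v, G.degree v = 2 * (r * s + r * t + s * t) := by
    have e0 : r + s + t - r = s + t := by omega
    have e1 : r + s + t - s = r + t := by omega
    have e2 : r + s + t - t = r + s := by omega
    calc ∑ v, G.degree v
        = ∑ v : Σ i : Fin 3, Fin (![r, s, t] i), (r + s + t - ![r, s, t] v.1) :=
          Finset.sum_congr rfl (fun v _ => deg_eq r s t v)
      _ = ∑ i : Fin 3, ∑ _x : Fin (![r, s, t] i), (r + s + t - ![r, s, t] i) := by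
          rw [← Finset.univ_sigma_univ, Finset.sum_sigma]
      _ = ∑ i : Fin 3, (![r, s, t] i) * (r + s + t - ![r, s, t] i) := by
          simp [Finset.sum_const, mul_comm]
      _ = r * (s + t) + s * (r + t) + t * (r + s) := by
          rw [Fin.sum_univ_three]
          simp only [Matrix.cons_val_zero, Matrix.cons_val_one, Matrix.head_cons,
            Matrix.cons_val_two, Matrix.tail_cons]
          rw [e0, e1, e2]
      _ = 2 * (r * s + r * t + s * t) := by ring
  have hecard : G.edgeFinset.card = r * s + r * t + s * t := by
    have h2 := G.sum_degrees_eq_twice_card_edges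
    rw [hdegsum] at h2
    exact (Nat.eq_of_mul_eq_mul_left (by norm_num) h2.symm)
  have hcard5 : G.edgeFinset.card = DF.card * 5 := by
    have h1 : (G.edgeFinset.filter (fun _ => True)).card
        = ∑ E ∈ DF, ((Set.toFinite E).toFinset.filter (fun _ => True)).card := key _
    rw [Finset.filter_true] at h1
    rw [h1]
    rw [Finset.sum_congr rfl (fun E hE => ?_), Finset.sum_const, smul_eq_mul]
    obtain ⟨v, w, hc, hl, hEw⟩ := hcyc' E hE
    subst hEw
    rw [cycle_filter_card hc]
    simpa using hl
  have heven : ∀ x, Even (G.degree x) := by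
    intro x
    rw [← G.card_incidenceFinset_eq_degree, incidenceFinset_eq_filter, key _]
    refine even_iff_two_dvd.mpr (Finset.dvd_sum fun E hE => even_iff_two_dvd.mp ?_)
    obtain ⟨v, w, hc, hl, hEw⟩ := hcyc' E hE
    subst hEw
    rw [cycle_filter_card hc]
    have h3 := (hc.isTrail.even_countP_edges_iff x).mpr (by simp)
    rwa [List.countP_eq_length_filter] at h3
  have hst' : Even (s + t) := by
    have h4 := heven ⟨0, ⟨0, by simpa using hr⟩⟩
    rw [deg_eq] at h4
    have h2 : r + s + t - r = s + t := by omega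
    simpa [h2] using h4
  have hrt' : Even (r + t) := by
    have h4 := heven ⟨1, ⟨0, by simpa using hs⟩⟩
    rw [deg_eq] at h4
    have h2 : r + s + t - s = r + t := by omega
    simpa [h2] using h4
  have hrs' : Even (r + s) := by
    have h4 := heven ⟨2, ⟨0, by simpa using ht⟩⟩
    rw [deg_eq] at h4
    have h2 : r + s + t - t = r + s := by omega
    simpa [h2] using h4
  have hP : (G.edgeFinset.filter (fun e => ∃ a ∈ e, a.1 = (2 : Fin 3))).card
      = t * (r + s) := by
    have hfP : G.edgeFinset.filter (fun e => ∃ a ∈ e, a.1 = (2 : Fin 3))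
        = Finset.univ.biUnion
            (fun x : Fin (![r, s, t] 2) => G.incidenceFinset ⟨2, x⟩) := by
      ext e
      simp only [Finset.mem_filter, Finset.mem_biUnion, Finset.mem_univ, true_and,
        mem_incidenceFinset, incidenceSet, Set.mem_setOf_eq, Set.mem_sep_iff,
        mem_edgeSet, mem_edgeFinset]
      constructor
      · rintro ⟨he, a, ha, ha2⟩
        obtain ⟨i, y⟩ := a
        cases ha2
        exact ⟨y, he, ha⟩
      · rintro ⟨x, he, hx⟩
        exact ⟨he, ⟨2, x⟩, hx, rfl⟩
    rw [hfP, Finset.card_biUnion]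
    · have hdx : ∀ x : Fin (![r, s, t] 2),
          (G.incidenceFinset (⟨2, x⟩ : Σ i : Fin 3, Fin (![r, s, t] i))).card = r + s := by
        intro x
        rw [G.card_incidenceFinset_eq_degree, deg_eq]
        show r + s + t - t = r + s
        omega
      rw [Finset.sum_congr rfl (fun x _ => hdx x), Finset.sum_const, smul_eq_mul]
      rw [Finset.card_univ, Fintype.card_fin]; rfl
    · intro x _ y _ hxy
      rw [Function.onFun, Finset.disjoint_left]
      intro e he1 he2
      rw [mem_incidenceFinset] at he1 he2
      have hne : (⟨2, x⟩ : Σ i : Fin 3, Fin (![r, s, t] i)) ≠ ⟨2, y⟩ := by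
        intro h; exact hxy (eq_of_heq (Sigma.mk.inj_iff.mp h).2)
      have hmm := (Sym2.mem_and_mem_iff hne).mp ⟨he1.2, he2.2⟩
      have hadj : G.Adj ⟨2, x⟩ ⟨2, y⟩ := by
        rw [← mem_edgeSet, ← hmm]
        exact he1.1
      exact (hadj (rfl : (2 : Fin 3) = 2)).elim
  have hPle : t * (r + s) ≤ DF.card * 4 := by
    rw [← hP, key _]
    refine le_trans (Finset.sum_le_sum fun E hE => ?_)
      (by rw [Finset.sum_const, smul_eq_mul])
    obtain ⟨v, w, hc, hl, hEw⟩ := hcyc' E hE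
    subst hEw
    rw [cycle_filter_card hc]
    exact cycle_part2_le hl
  rw [hecard] at hcard5
  refine ⟨?_, ⟨DF.card, by omega⟩, ?_⟩
  · rw [Nat.even_iff] at hst' hrt' hrs'
    omega
  · have hexp : t * (r + s) = r * t + s * t := by ring
    linarith
end

section
/- The complete tripartite graph K_{5,5,5} admits a 5-cycle decomposition. -/
open SimpleGraph

namespace K555

abbrev V : Type := Σ i : Fin 3, Fin (![5, 5, 5] i)
abbrev G : SimpleGraph V := completeTripartiteGraph 5 5 5

def vA (j : Fin 5) : V := ⟨0, j⟩
def vB (j : Fin 5) : V := ⟨1, j⟩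
def vC (j : Fin 5) : V := ⟨2, j⟩

instance : DecidableRel G.Adj := fun x y =>
  decidable_of_iff (x.1 ≠ y.1)
    (by simp [G, completeTripartiteGraph, completeMultipartiteGraph])

def mk5 (a b c d e : V) (h1 : G.Adj a b) (h2 : G.Adj b c) (h3 : G.Adj c d)
    (h4 : G.Adj d e) (h5 : G.Adj e a) : G.Walk a a :=
  .cons h1 (.cons h2 (.cons h3 (.cons h4 (.cons h5 .nil))))

def w0 : G.Walk (vA 0) (vA 0) :=
  mk5 (vA 0) (vB 0) (vA 1) (vB 2) (vC 0) (by decide) (by decide) (by decide) (by decide) (by decide)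
theorem cyc0 : w0.IsCycle := ⟨⟨⟨by decide⟩, fun h => by cases h⟩, by decide⟩
def w1 : G.Walk (vB 0) (vB 0) :=
  mk5 (vB 0) (vC 0) (vB 1) (vC 2) (vA 3) (by decide) (by decide) (by decide) (by decide) (by decide)
theorem cyc1 : w1.IsCycle := ⟨⟨⟨by decide⟩, fun h => by cases h⟩, by decide⟩
def w2 : G.Walk (vC 0) (vC 0) :=
  mk5 (vC 0) (vA 3) (vC 1) (vA 0) (vB 3) (by decide) (by decide) (by decide) (by decide) (by decide)
theorem cyc2 : w2.IsCycle := ⟨⟨⟨by decide⟩, fun h => by cases h⟩, by decide⟩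
def w3 : G.Walk (vA 1) (vA 1) :=
  mk5 (vA 1) (vB 1) (vA 2) (vB 3) (vC 1) (by decide) (by decide) (by decide) (by decide) (by decide)
theorem cyc3 : w3.IsCycle := ⟨⟨⟨by decide⟩, fun h => by cases h⟩, by decide⟩
def w4 : G.Walk (vB 1) (vB 1) :=
  mk5 (vB 1) (vC 1) (vB 2) (vC 3) (vA 4) (by decide) (by decide) (by decide) (by decide) (by decide)
theorem cyc4 : w4.IsCycle := ⟨⟨⟨by decide⟩, fun h => by cases h⟩, by decide⟩
def w5 : G.Walk (vC 1) (vC 1) :=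
  mk5 (vC 1) (vA 4) (vC 2) (vA 1) (vB 4) (by decide) (by decide) (by decide) (by decide) (by decide)
theorem cyc5 : w5.IsCycle := ⟨⟨⟨by decide⟩, fun h => by cases h⟩, by decide⟩
def w6 : G.Walk (vA 2) (vA 2) :=
  mk5 (vA 2) (vB 2) (vA 3) (vB 4) (vC 2) (by decide) (by decide) (by decide) (by decide) (by decide)
theorem cyc6 : w6.IsCycle := ⟨⟨⟨by decide⟩, fun h => by cases h⟩, by decide⟩
def w7 : G.Walk (vB 2) (vB 2) :=
  mk5 (vB 2) (vC 2) (vB 3) (vC 4) (vA 0) (by decide) (by decide) (by decide) (by decide) (by decide)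
theorem cyc7 : w7.IsCycle := ⟨⟨⟨by decide⟩, fun h => by cases h⟩, by decide⟩
def w8 : G.Walk (vC 2) (vC 2) :=
  mk5 (vC 2) (vA 0) (vC 3) (vA 2) (vB 0) (by decide) (by decide) (by decide) (by decide) (by decide)
theorem cyc8 : w8.IsCycle := ⟨⟨⟨by decide⟩, fun h => by cases h⟩, by decide⟩
def w9 : G.Walk (vA 3) (vA 3) :=
  mk5 (vA 3) (vB 3) (vA 4) (vB 0) (vC 3) (by decide) (by decide) (by decide) (by decide) (by decide)
theorem cyc9 : w9.IsCycle := ⟨⟨⟨by decide⟩, fun h => by cases h⟩, by decide⟩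
def w10 : G.Walk (vB 3) (vB 3) :=
  mk5 (vB 3) (vC 3) (vB 4) (vC 0) (vA 1) (by decide) (by decide) (by decide) (by decide) (by decide)
theorem cyc10 : w10.IsCycle := ⟨⟨⟨by decide⟩, fun h => by cases h⟩, by decide⟩
def w11 : G.Walk (vC 3) (vC 3) :=
  mk5 (vC 3) (vA 1) (vC 4) (vA 3) (vB 1) (by decide) (by decide) (by decide) (by decide) (by decide)
theorem cyc11 : w11.IsCycle := ⟨⟨⟨by decide⟩, fun h => by cases h⟩, by decide⟩
def w12 : G.Walk (vA 4) (vA 4) :=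
  mk5 (vA 4) (vB 4) (vA 0) (vB 1) (vC 4) (by decide) (by decide) (by decide) (by decide) (by decide)
theorem cyc12 : w12.IsCycle := ⟨⟨⟨by decide⟩, fun h => by cases h⟩, by decide⟩
def w13 : G.Walk (vB 4) (vB 4) :=
  mk5 (vB 4) (vC 4) (vB 0) (vC 1) (vA 2) (by decide) (by decide) (by decide) (by decide) (by decide)
theorem cyc13 : w13.IsCycle := ⟨⟨⟨by decide⟩, fun h => by cases h⟩, by decide⟩
def w14 : G.Walk (vC 4) (vC 4) :=
  mk5 (vC 4) (vA 2) (vC 0) (vA 4) (vB 2) (by decide) (by decide) (by decide) (by decide) (by decide)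
theorem cyc14 : w14.IsCycle := ⟨⟨⟨by decide⟩, fun h => by cases h⟩, by decide⟩

theorem listDisj {α : Type*} {L M : List α} (h : ∀ e ∈ L, e ∉ M) :
    Disjoint {e | e ∈ L} {e | e ∈ M} := Set.disjoint_left.2 h

end K555

set_option maxHeartbeats 2000000 in
set_option maxRecDepth 4000 in
set_option synthInstance.maxHeartbeats 1000000 in
set_option synthInstance.maxSize 2048 in
theorem stmt_4 : HasCycleDecomp (completeTripartiteGraph 5 5 5) {5} := by
  refine ⟨{{e | e ∈ K555.w0.edges}, {e | e ∈ K555.w1.edges}, {e | e ∈ K555.w2.edges}, {e | e ∈ K555.w3.edges}, {e | e ∈ K555.w4.edges}, {e | e ∈ K555.w5.edges}, {e | e ∈ K555.w6.edges}, {e | e ∈ K555.w7.edges}, {e | e ∈ K555.w8.edges}, {e | e ∈ K555.w9.edges}, {e | e ∈ K555.w10.edges}, {e | e ∈ K555.w11.edges}, {e | e ∈ K555.w12.edges}, {e | e ∈ K555.w13.edges}, {e | e ∈ K555.w14.edges}}, ?_, ?_, ?_⟩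
  · intro E hE
    simp only [Set.mem_insert_iff, Set.mem_singleton_iff] at hE
    rcases hE with rfl|rfl|rfl|rfl|rfl|rfl|rfl|rfl|rfl|rfl|rfl|rfl|rfl|rfl|rfl
    · exact ⟨_, K555.w0, K555.cyc0, Set.mem_singleton_iff.mpr rfl, rfl⟩
    · exact ⟨_, K555.w1, K555.cyc1, Set.mem_singleton_iff.mpr rfl, rfl⟩
    · exact ⟨_, K555.w2, K555.cyc2, Set.mem_singleton_iff.mpr rfl, rfl⟩
    · exact ⟨_, K555.w3, K555.cyc3, Set.mem_singleton_iff.mpr rfl, rfl⟩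
    · exact ⟨_, K555.w4, K555.cyc4, Set.mem_singleton_iff.mpr rfl, rfl⟩
    · exact ⟨_, K555.w5, K555.cyc5, Set.mem_singleton_iff.mpr rfl, rfl⟩
    · exact ⟨_, K555.w6, K555.cyc6, Set.mem_singleton_iff.mpr rfl, rfl⟩
    · exact ⟨_, K555.w7, K555.cyc7, Set.mem_singleton_iff.mpr rfl, rfl⟩
    · exact ⟨_, K555.w8, K555.cyc8, Set.mem_singleton_iff.mpr rfl, rfl⟩
    · exact ⟨_, K555.w9, K555.cyc9, Set.mem_singleton_iff.mpr rfl, rfl⟩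
    · exact ⟨_, K555.w10, K555.cyc10, Set.mem_singleton_iff.mpr rfl, rfl⟩
    · exact ⟨_, K555.w11, K555.cyc11, Set.mem_singleton_iff.mpr rfl, rfl⟩
    · exact ⟨_, K555.w12, K555.cyc12, Set.mem_singleton_iff.mpr rfl, rfl⟩
    · exact ⟨_, K555.w13, K555.cyc13, Set.mem_singleton_iff.mpr rfl, rfl⟩
    · exact ⟨_, K555.w14, K555.cyc14, Set.mem_singleton_iff.mpr rfl, rfl⟩
  · ext e
    induction e using Sym2.ind with
    | _ x y =>
      simp only [Set.sUnion_insert, Set.sUnion_singleton, Set.mem_union,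
        Set.mem_setOf_eq, mem_edgeSet]
      revert x y
      decide
  · intro a ha b hb hne
    simp only [Set.mem_insert_iff, Set.mem_singleton_iff] at ha hb
    rcases ha with rfl|rfl|rfl|rfl|rfl|rfl|rfl|rfl|rfl|rfl|rfl|rfl|rfl|rfl|rfl <;> rcases hb with rfl|rfl|rfl|rfl|rfl|rfl|rfl|rfl|rfl|rfl|rfl|rfl|rfl|rfl|rfl <;>
      first
        | exact K555.listDisj (by decide)
        | exact absurd rfl hne
end

section
/- Let B be the simple graph on vertex set (ZMod 5) × (ZMod 5) in which (a, i) is adjacent to (b, j) if and only if b - a ∈ {1, -1} in ZMod 5 (this graph is the 5-blowup B_5(C_5) of the 5-cycle C_5). Then B admits a 5-cycle decomposition. -/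
open SimpleGraph

/-- The 5-blowup of the 5-cycle: `(a, i)` is adjacent to `(b, j)` iff
`b - a ∈ {1, -1}` in `ZMod 5`. -/
def blowupC5 : SimpleGraph (ZMod 5 × ZMod 5) where
  Adj u v := v.1 - u.1 = 1 ∨ v.1 - u.1 = -1
  symm := by
    constructor
    intro u v h
    rcases h with h | h
    · right
      rw [← neg_sub, h]
    · left
      rw [← neg_sub, h, neg_neg]
  loopless := by
    constructor
    intro u h
    simp only [sub_self] at h
    rcases h with h | h <;> exact absurd h (by decide)

def wk (i j : ZMod 5) : blowupC5.Walk (0, i) (0, i) :=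
  .cons (show blowupC5.Adj (0, i) (1, i + j) from Or.inl rfl)
    (.cons (show blowupC5.Adj (1, i + j) (2, i + 2 * j) from Or.inl rfl)
      (.cons (show blowupC5.Adj (2, i + 2 * j) (3, i + 3 * j) from Or.inl rfl)
        (.cons (show blowupC5.Adj (3, i + 3 * j) (4, i + 4 * j) from Or.inl rfl)
          (.cons (show blowupC5.Adj (4, i + 4 * j) (0, i) from Or.inl rfl) .nil))))




lemma edges_wk (i j : ZMod 5) : (wk i j).edges =
    [s(((0:ZMod 5), i), (1, i + j)), s((1, i + j), (2, i + 2*j)),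
     s((2, i + 2*j), (3, i + 3*j)), s((3, i + 3*j), (4, i + 4*j)),
     s((4, i + 4*j), ((0:ZMod 5), i))] := rfl



lemma wk_key : ∀ i j i' j' : ZMod 5, ∀ e, e ∈ (wk i j).edges → e ∈ (wk i' j').edges →
    i = i' ∧ j = j' := by
  have d01 : (0:ZMod 5) ≠ 1 := by decide
  have d02 : (0:ZMod 5) ≠ 2 := by decide
  have d03 : (0:ZMod 5) ≠ 3 := by decide
  have d04 : (0:ZMod 5) ≠ 4 := by decide
  have d12 : (1:ZMod 5) ≠ 2 := by decide
  have d13 : (1:ZMod 5) ≠ 3 := by decide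
  have d14 : (1:ZMod 5) ≠ 4 := by decide
  have d23 : (2:ZMod 5) ≠ 3 := by decide
  have d24 : (2:ZMod 5) ≠ 4 := by decide
  have d34 : (3:ZMod 5) ≠ 4 := by decide
  haveI : Fact (Nat.Prime 5) := ⟨by norm_num⟩
  intro i j i' j' e h1 h2
  rw [edges_wk, List.mem_cons] at h1 h2
  simp only [List.mem_cons, List.mem_singleton] at h1 h2
  rcases h1 with rfl|rfl|rfl|rfl|rfl|h1 <;>
    [skip;skip;skip;skip;skip;exact absurd h1 (by simp)] <;>
  rcases h2 with h2|h2|h2|h2|h2|h2 <;>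
  simp_all [Sym2.eq_iff, Prod.ext_iff, d01, d02, d03, d04, d12, d13, d14, d23, d24, d34,
    d01.symm, d02.symm, d03.symm, d04.symm, d12.symm, d13.symm, d14.symm, d23.symm, d24.symm, d34.symm]
  · linear_combination h2.2 - h2.1
  · exact ⟨by linear_combination 2*h2.1 - h2.2, by linear_combination h2.2 - h2.1⟩
  · exact ⟨by linear_combination 3*h2.1 - 2*h2.2, by linear_combination h2.2 - h2.1⟩
  · exact ⟨by linear_combination 4*h2.1 - 3*h2.2, by linear_combination h2.2 - h2.1⟩
  · have h4 : (4:ZMod 5) * j = 4 * j' := by linear_combination h2.1 - h2.2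
    have h40 : (4:ZMod 5) ≠ 0 := fun h => d04 h.symm
    exact mul_left_cancel₀ h40 h4

lemma wk_cover (a x y : ZMod 5) :
    s((a, x), (a + 1, y)) ∈ (wk (x - a * (y - x)) (y - x)).edges := by
  have ha : a = 0 ∨ a = 1 ∨ a = 2 ∨ a = 3 ∨ a = 4 := by revert a; decide
  rcases ha with rfl|rfl|rfl|rfl|rfl <;>
    simp [edges_wk, Sym2.eq_iff, Prod.ext_iff]
  · exact Or.inr (Or.inl (Or.inl ⟨by decide, by ring⟩))
  · exact Or.inr (Or.inr (Or.inl (Or.inl ⟨by decide, by ring⟩)))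
  · exact Or.inr (Or.inr (Or.inr (Or.inl (Or.inl ⟨by decide, by ring⟩))))
  · have h5 : (5 : ZMod 5) = 0 := by decide
    exact Or.inr (Or.inr (Or.inr (Or.inr (Or.inl ⟨by decide, by linear_combination (y - x) * h5⟩))))

set_option maxRecDepth 10000 in
lemma nodup_wk : ∀ p : ZMod 5 × ZMod 5,
    (wk p.1 p.2).edges.Nodup ∧ (wk p.1 p.2).support.tail.Nodup := by decide

theorem stmt_5 : HasCycleDecomp blowupC5 {5} := by
  refine ⟨Set.range (fun p : ZMod 5 × ZMod 5 => {e | e ∈ (wk p.1 p.2).edges}), ?_, ?_, ?_⟩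
  · rintro E ⟨p, rfl⟩
    exact ⟨(0, p.1), wk p.1 p.2, ⟨⟨⟨(nodup_wk p).1⟩, by simp [wk]⟩, (nodup_wk p).2⟩, rfl, rfl⟩
  · apply Set.Subset.antisymm
    · rintro e ⟨E, ⟨p, rfl⟩, he⟩
      exact (wk p.1 p.2).edges_subset_edgeSet he
    · intro e he
      revert he
      refine Sym2.inductionOn e ?_
      rintro ⟨a, x⟩ ⟨b, y⟩ he
      rw [SimpleGraph.mem_edgeSet] at he
      rcases he with h | h
      · have hb : b = a + 1 := by linear_combination h
        subst hb
        exact ⟨_, ⟨(x - a * (y - x), y - x), rfl⟩, wk_cover a x y⟩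
      · have hb : a = b + 1 := by linear_combination -h
        subst hb
        rw [Sym2.eq_swap]
        exact ⟨_, ⟨(y - b * (x - y), x - y), rfl⟩, wk_cover b y x⟩
  · rintro E ⟨p, rfl⟩ F ⟨q, rfl⟩ hne
    simp only [Function.onFun, id_eq]
    rw [Set.disjoint_left]
    intro e he1 he2
    have hk := wk_key p.1 p.2 q.1 q.2 e he1 he2
    exact hne (by rw [show p = q from Prod.ext hk.1 hk.2])
end

section
/- Let r, s, t be positive integers. If the complete tripartite graph K_{r,s,t} admits a decomposition into triangles and 5-cycles, then the complete tripartite graph K_{5r,5s,5t} admits a 5-cycle decomposition. -/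
open SimpleGraph

/-! ### Auxiliary machinery -/

/-- part pattern of the 5-cycles blowing up a triangle -/
def trioP : ZMod 5 → ZMod 3 := ![0, 1, 0, 1, 2]
/-- coordinate pattern of the 5-cycles blowing up a triangle -/
def trioX : ZMod 5 → ZMod 5 := ![0, 1, 1, 3, 2]

lemma trio_inj : ∀ p p' : ZMod 5, trioP p = trioP p' → trioX p = trioX p' → p = p' := by decide

lemma trio_cons : ∀ p : ZMod 5, ∃ d : ZMod 3,
    (trioP p = d ∧ trioP (p+1) = d+1) ∨ (trioP p = d+1 ∧ trioP (p+1) = d) := by decide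

set_option maxHeartbeats 4000000 in
set_option maxRecDepth 100000 in
lemma trio_match : ∀ (i : ZMod 3) (x y : ZMod 5), ∃! z : (ZMod 3 × ZMod 5) × ZMod 5,
    (z.1.1 + trioP z.2 = i ∧ z.1.1 + trioP (z.2+1) = i+1 ∧
      z.1.2 + trioX z.2 = x ∧ z.1.2 + trioX (z.2+1) = y) ∨
    (z.1.1 + trioP z.2 = i+1 ∧ z.1.1 + trioP (z.2+1) = i ∧
      z.1.2 + trioX z.2 = y ∧ z.1.2 + trioX (z.2+1) = x) := by
  have : ∀ (i : ZMod 3) (x y : ZMod 5), ∃ z : (ZMod 3 × ZMod 5) × ZMod 5,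
    ((z.1.1 + trioP z.2 = i ∧ z.1.1 + trioP (z.2+1) = i+1 ∧
      z.1.2 + trioX z.2 = x ∧ z.1.2 + trioX (z.2+1) = y) ∨
    (z.1.1 + trioP z.2 = i+1 ∧ z.1.1 + trioP (z.2+1) = i ∧
      z.1.2 + trioX z.2 = y ∧ z.1.2 + trioX (z.2+1) = x)) ∧
    ∀ z' : (ZMod 3 × ZMod 5) × ZMod 5,
    ((z'.1.1 + trioP z'.2 = i ∧ z'.1.1 + trioP (z'.2+1) = i+1 ∧
      z'.1.2 + trioX z'.2 = x ∧ z'.1.2 + trioX (z'.2+1) = y) ∨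
    (z'.1.1 + trioP z'.2 = i+1 ∧ z'.1.1 + trioP (z'.2+1) = i ∧
      z'.1.2 + trioX z'.2 = y ∧ z'.1.2 + trioX (z'.2+1) = x)) → z' = z := by
    decide
  exact this

lemma penta_match : ∀ (i x y : ZMod 5), ∃! z : (ZMod 5 × ZMod 5) × ZMod 5,
    (z.2 = i ∧ z.2 + 1 = i + 1 ∧ z.1.1 + z.1.2 * z.2 = x ∧ z.1.1 + z.1.2 * (z.2 + 1) = y) ∨
    (z.2 = i + 1 ∧ z.2 + 1 = i ∧ z.1.1 + z.1.2 * z.2 = y ∧ z.1.1 + z.1.2 * (z.2 + 1) = x) := by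
  intro i x y
  refine ⟨((x - (y - x) * i, y - x), i), Or.inl ⟨rfl, rfl, by ring, by ring⟩, ?_⟩
  rintro ⟨⟨a, b⟩, p⟩ (⟨h1, h2, h3, h4⟩ | ⟨h1, h2, h3, h4⟩)
  · subst h1
    have hb : b = y - x := by rw [← h3, ← h4]; ring
    have ha : a = x - (y - x) * p := by rw [← hb, ← h3]; ring
    rw [ha, hb]
  · exfalso
    have : i + 2 = i := by rw [show i + 2 = i + 1 + 1 by ring, ← h1, h2]
    have h5 : ∀ j : ZMod 5, j + 2 ≠ j := by decide
    exact h5 i this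

section CycleLemmas

variable {V : Type*} {G : SimpleGraph V}

/-- Edge set determined by a cyclic vertex function. -/
def EdgesOf {n : ℕ} (f : ZMod n → V) : Set (Sym2 V) :=
  {e | ∃ i : ZMod n, e = s(f i, f (i + 1))}

lemma mkCycle5 (f : ZMod 5 → V) (hinj : Function.Injective f)
    (hadj : ∀ i, G.Adj (f i) (f (i + 1))) :
    ∃ (v : V) (w : G.Walk v v),
      w.IsCycle ∧ w.length = 5 ∧ {e | e ∈ w.edges} = EdgesOf f := by
  have hne : ∀ {i j : ZMod 5}, i ≠ j → f i ≠ f j := fun h hb => h (hinj hb)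
  have h0 := hadj 0; have h1 := hadj 1; have h2 := hadj 2
  have h3 := hadj 3; have h4 := hadj 4
  rw [show (0:ZMod 5)+1 = 1 from by decide] at h0
  rw [show (1:ZMod 5)+1 = 2 from by decide] at h1
  rw [show (2:ZMod 5)+1 = 3 from by decide] at h2
  rw [show (3:ZMod 5)+1 = 4 from by decide] at h3
  rw [show (4:ZMod 5)+1 = 0 from by decide] at h4
  refine ⟨f 0, .cons h0 (.cons h1 (.cons h2 (.cons h3 (.cons h4 .nil)))), ?_, rfl, ?_⟩
  · rw [Walk.isCycle_def]
    refine ⟨⟨?_⟩, by simp, ?_⟩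
    · simp [Walk.edges_cons, List.nodup_cons, Sym2.eq_iff]
      refine ⟨?_, ?_, ?_, ?_⟩ <;>
        simp [hne (by decide : (0:ZMod 5) ≠ 1), hne (by decide : (0:ZMod 5) ≠ 2),
          hne (by decide : (0:ZMod 5) ≠ 3), hne (by decide : (0:ZMod 5) ≠ 4),
          hne (by decide : (1:ZMod 5) ≠ 2), hne (by decide : (1:ZMod 5) ≠ 3),
          hne (by decide : (1:ZMod 5) ≠ 4), hne (by decide : (2:ZMod 5) ≠ 3),
          hne (by decide : (2:ZMod 5) ≠ 4), hne (by decide : (3:ZMod 5) ≠ 4),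
          (hne (by decide : (1:ZMod 5) ≠ 0)), (hne (by decide : (2:ZMod 5) ≠ 0)),
          (hne (by decide : (3:ZMod 5) ≠ 0)), (hne (by decide : (4:ZMod 5) ≠ 0)),
          (hne (by decide : (2:ZMod 5) ≠ 1)), (hne (by decide : (3:ZMod 5) ≠ 1)),
          (hne (by decide : (4:ZMod 5) ≠ 1)), (hne (by decide : (3:ZMod 5) ≠ 2)),
          (hne (by decide : (4:ZMod 5) ≠ 2)), (hne (by decide : (4:ZMod 5) ≠ 3))]
    · simp [Walk.support_cons, List.nodup_cons]
      refine ⟨?_, ?_, ?_, ?_⟩ <;>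
        simp [hne (by decide : (1:ZMod 5) ≠ 2), hne (by decide : (1:ZMod 5) ≠ 3),
          hne (by decide : (1:ZMod 5) ≠ 4), hne (by decide : (1:ZMod 5) ≠ 0),
          hne (by decide : (2:ZMod 5) ≠ 3), hne (by decide : (2:ZMod 5) ≠ 4),
          hne (by decide : (2:ZMod 5) ≠ 0), hne (by decide : (3:ZMod 5) ≠ 4),
          hne (by decide : (3:ZMod 5) ≠ 0), hne (by decide : (4:ZMod 5) ≠ 0)]
  · ext e
    simp only [Set.mem_setOf_eq, Walk.edges_cons, Walk.edges_nil, List.mem_cons,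
      List.not_mem_nil, or_false, EdgesOf]
    constructor
    · rintro (rfl | rfl | rfl | rfl | rfl)
      exacts [⟨0, by rw [show ((0:ZMod 5)+1) = 1 from by decide]; try rfl⟩,
        ⟨1, by rw [show ((1:ZMod 5)+1) = 2 from by decide]; try rfl⟩,
        ⟨2, by rw [show ((2:ZMod 5)+1) = 3 from by decide]; try rfl⟩,
        ⟨3, by rw [show ((3:ZMod 5)+1) = 4 from by decide]; try rfl⟩,
        ⟨4, by rw [show ((4:ZMod 5)+1) = 0 from by decide]; try rfl⟩]
    · rintro ⟨i, rfl⟩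
      have key : ∀ j : ZMod 5, j = 0 ∨ j = 1 ∨ j = 2 ∨ j = 3 ∨ j = 4 := by decide
      rcases key i with rfl | rfl | rfl | rfl | rfl <;>
        simp [show ((0:ZMod 5)+1) = 1 from by decide, show ((1:ZMod 5)+1) = 2 from by decide,
          show ((2:ZMod 5)+1) = 3 from by decide, show ((3:ZMod 5)+1) = 4 from by decide,
          show ((4:ZMod 5)+1) = 0 from by decide]

lemma extract5 {v : V} (w : G.Walk v v) (hc : w.IsCycle) (hl : w.length = 5) :
    ∃ g : ZMod 5 → V, Function.Injective g ∧ (∀ i, G.Adj (g i) (g (i + 1))) ∧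
      {e | e ∈ w.edges} = EdgesOf g := by
  cases w with
  | nil => simp at hl
  | cons h1 w =>
  cases w with
  | nil => simp at hl
  | cons h2 w =>
  cases w with
  | nil => simp at hl
  | cons h3 w =>
  cases w with
  | nil => simp at hl
  | cons h4 w =>
  cases w with
  | nil => simp at hl
  | cons h5 w =>
  cases w with
  | cons h6 w => simp [Walk.length_cons] at hl
  | nil =>
  rename_i a b c d
  -- vertices v, a, b, c, d, back to v
  refine ⟨![v, a, b, c, d], ?_, ?_, ?_⟩
  · have hs := hc.support_nodup
    simp [Walk.support_cons, List.nodup_cons] at hs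
    obtain ⟨⟨hav, hab, hac, had⟩, ⟨hbv, hbc, hbd⟩, ⟨hcv, hcd⟩, hdv⟩ := hs
    intro i j hij
    have key : ∀ j : ZMod 5, j = 0 ∨ j = 1 ∨ j = 2 ∨ j = 3 ∨ j = 4 := by decide
    rcases key i with rfl | rfl | rfl | rfl | rfl <;>
      rcases key j with rfl | rfl | rfl | rfl | rfl <;>
      simp_all [show ((![v,a,b,c,d] : ZMod 5 → V) 0) = v from rfl,
        show ((![v,a,b,c,d] : ZMod 5 → V) 1) = a from rfl,
        show ((![v,a,b,c,d] : ZMod 5 → V) 2) = b from rfl,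
        show ((![v,a,b,c,d] : ZMod 5 → V) 3) = c from rfl,
        show ((![v,a,b,c,d] : ZMod 5 → V) 4) = d from rfl]
  · intro i
    have key : ∀ j : ZMod 5, j = 0 ∨ j = 1 ∨ j = 2 ∨ j = 3 ∨ j = 4 := by decide
    rcases key i with rfl | rfl | rfl | rfl | rfl <;>
      simp only [show ((0:ZMod 5)+1) = 1 from by decide, show ((1:ZMod 5)+1) = 2 from by decide,
        show ((2:ZMod 5)+1) = 3 from by decide, show ((3:ZMod 5)+1) = 4 from by decide,
        show ((4:ZMod 5)+1) = 0 from by decide] <;>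
      first
        | exact h1 | exact h2 | exact h3 | exact h4 | exact h5
  · ext e
    simp only [Set.mem_setOf_eq, Walk.edges_cons, Walk.edges_nil, List.mem_cons,
      List.not_mem_nil, or_false, EdgesOf]
    constructor
    · rintro (rfl | rfl | rfl | rfl | rfl)
      exacts [⟨0, by rw [show ((0:ZMod 5)+1) = 1 from by decide]; try rfl⟩,
        ⟨1, by rw [show ((1:ZMod 5)+1) = 2 from by decide]; try rfl⟩,
        ⟨2, by rw [show ((2:ZMod 5)+1) = 3 from by decide]; try rfl⟩,
        ⟨3, by rw [show ((3:ZMod 5)+1) = 4 from by decide]; try rfl⟩,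
        ⟨4, by rw [show ((4:ZMod 5)+1) = 0 from by decide]; try rfl⟩]
    · rintro ⟨i, rfl⟩
      have key : ∀ j : ZMod 5, j = 0 ∨ j = 1 ∨ j = 2 ∨ j = 3 ∨ j = 4 := by decide
      rcases key i with rfl | rfl | rfl | rfl | rfl <;>
        simp [show ((0:ZMod 5)+1) = 1 from by decide, show ((1:ZMod 5)+1) = 2 from by decide,
          show ((2:ZMod 5)+1) = 3 from by decide, show ((3:ZMod 5)+1) = 4 from by decide,
          show ((4:ZMod 5)+1) = 0 from by decide]

lemma extract3 {v : V} (w : G.Walk v v) (hc : w.IsCycle) (hl : w.length = 3) :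
    ∃ g : ZMod 3 → V, Function.Injective g ∧ (∀ i, G.Adj (g i) (g (i + 1))) ∧
      {e | e ∈ w.edges} = EdgesOf g := by
  cases w with
  | nil => simp at hl
  | cons h1 w =>
  cases w with
  | nil => simp at hl
  | cons h2 w =>
  cases w with
  | nil => simp at hl
  | cons h3 w =>
  cases w with
  | cons h4 w => simp [Walk.length_cons] at hl
  | nil =>
  rename_i a b
  refine ⟨![v, a, b], ?_, ?_, ?_⟩
  · have hs := hc.support_nodup
    simp [Walk.support_cons, List.nodup_cons] at hs
    obtain ⟨⟨hav, hab⟩, hbv⟩ := hs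
    intro i j hij
    have key : ∀ j : ZMod 3, j = 0 ∨ j = 1 ∨ j = 2 := by decide
    rcases key i with rfl | rfl | rfl <;>
      rcases key j with rfl | rfl | rfl <;>
      simp_all [show ((![v,a,b] : ZMod 3 → V) 0) = v from rfl,
        show ((![v,a,b] : ZMod 3 → V) 1) = a from rfl,
        show ((![v,a,b] : ZMod 3 → V) 2) = b from rfl]
  · intro i
    have key : ∀ j : ZMod 3, j = 0 ∨ j = 1 ∨ j = 2 := by decide
    rcases key i with rfl | rfl | rfl <;>
      simp only [show ((0:ZMod 3)+1) = 1 from by decide, show ((1:ZMod 3)+1) = 2 from by decide,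
        show ((2:ZMod 3)+1) = 0 from by decide] <;>
      first
        | exact h1 | exact h2 | exact h3
  · ext e
    simp only [Set.mem_setOf_eq, Walk.edges_cons, Walk.edges_nil, List.mem_cons,
      List.not_mem_nil, or_false, EdgesOf]
    constructor
    · rintro (rfl | rfl | rfl)
      exacts [⟨0, by rw [show ((0:ZMod 3)+1) = 1 from by decide]; try rfl⟩,
        ⟨1, by rw [show ((1:ZMod 3)+1) = 2 from by decide]; try rfl⟩,
        ⟨2, by rw [show ((2:ZMod 3)+1) = 0 from by decide]; try rfl⟩]
    · rintro ⟨i, rfl⟩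
      have key : ∀ j : ZMod 3, j = 0 ∨ j = 1 ∨ j = 2 := by decide
      rcases key i with rfl | rfl | rfl <;>
        simp [show ((0:ZMod 3)+1) = 1 from by decide, show ((1:ZMod 3)+1) = 2 from by decide,
          show ((2:ZMod 3)+1) = 0 from by decide]

lemma blowup_s7 {V' : Type*} {G' : SimpleGraph V'}
    (pr : V' → V) (emb : V → ZMod 5 → V')
    (hembinj : ∀ v k v' k', emb v k = emb v' k' → v = v' ∧ k = k')
    (hsurj : ∀ u : V', ∃ v k, u = emb v k)
    (hpr : ∀ v k, pr (emb v k) = v)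
    (hadj : ∀ u u' : V', G'.Adj u u' ↔ G.Adj (pr u) (pr u'))
    {n : ℕ} (g : ZMod n → V) (ginj : Function.Injective g)
    (gadj : ∀ i, G.Adj (g i) (g (i + 1)))
    (htwo : ∀ i : ZMod n, i + 2 ≠ i)
    {K : Type*} (A : K → ZMod 5 → ZMod n) (B : K → ZMod 5 → ZMod 5)
    (hinjAB : ∀ κ p p', A κ p = A κ p' → B κ p = B κ p' → p = p')
    (hA : ∀ κ p, ∃ i : ZMod n,
      (A κ p = i ∧ A κ (p+1) = i+1) ∨ (A κ p = i+1 ∧ A κ (p+1) = i))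
    (hmatch : ∀ (i : ZMod n) (x y : ZMod 5), ∃! z : K × ZMod 5,
      (A z.1 z.2 = i ∧ A z.1 (z.2+1) = i+1 ∧ B z.1 z.2 = x ∧ B z.1 (z.2+1) = y) ∨
      (A z.1 z.2 = i+1 ∧ A z.1 (z.2+1) = i ∧ B z.1 z.2 = y ∧ B z.1 (z.2+1) = x)) :
    ∃ F : Set (Set (Sym2 V')),
      (∀ C ∈ F, ∃ (u : V') (w : G'.Walk u u),
        w.IsCycle ∧ w.length = 5 ∧ C = {e | e ∈ w.edges}) ∧
      ⋃₀ F = {e | Sym2.map pr e ∈ EdgesOf g} ∧ F.PairwiseDisjoint id := by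
  set f : K → ZMod 5 → V' := fun κ p => emb (g (A κ p)) (B κ p) with hf
  -- injectivity of each f κ
  have hfinj : ∀ κ, Function.Injective (f κ) := by
    intro κ p p' hpp'
    obtain ⟨hg, hB⟩ := hembinj _ _ _ _ hpp'
    exact hinjAB κ p p' (ginj hg) hB
  -- adjacency of each f κ
  have hfadj : ∀ κ p, G'.Adj (f κ p) (f κ (p+1)) := by
    intro κ p
    rw [hadj]
    simp only [hf, hpr]
    obtain ⟨i, h | h⟩ := hA κ p
    · rw [h.1, h.2]; exact gadj i
    · rw [h.1, h.2]; exact (gadj i).symm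
  -- canonical descriptor of each edge
  have claim1 : ∀ κ p, ∃ (i : ZMod n) (x y : ZMod 5),
      ((A κ p = i ∧ A κ (p+1) = i+1 ∧ B κ p = x ∧ B κ (p+1) = y) ∨
       (A κ p = i+1 ∧ A κ (p+1) = i ∧ B κ p = y ∧ B κ (p+1) = x)) ∧
      s(f κ p, f κ (p+1)) = s(emb (g i) x, emb (g (i+1)) y) := by
    intro κ p
    obtain ⟨i, h | h⟩ := hA κ p
    · refine ⟨i, B κ p, B κ (p+1), Or.inl ⟨h.1, h.2, rfl, rfl⟩, ?_⟩
      show s(emb (g (A κ p)) (B κ p), emb (g (A κ (p+1))) (B κ (p+1))) = _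
      rw [h.1, h.2]
    · refine ⟨i, B κ (p+1), B κ p, Or.inr ⟨h.1, h.2, rfl, rfl⟩, ?_⟩
      show s(emb (g (A κ p)) (B κ p), emb (g (A κ (p+1))) (B κ (p+1))) = _
      rw [h.1, h.2]; exact Sym2.eq_swap
  refine ⟨Set.range (fun κ => EdgesOf (f κ)), ?_, ?_, ?_⟩
  · rintro C ⟨κ, rfl⟩
    obtain ⟨u, w, hw1, hw2, hw3⟩ := mkCycle5 (f κ) (hfinj κ) (hfadj κ)
    exact ⟨u, w, hw1, hw2, hw3.symm⟩
  · ext e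
    simp only [Set.sUnion_range, Set.mem_iUnion, Set.mem_setOf_eq, EdgesOf]
    constructor
    · rintro ⟨κ, p, rfl⟩
      obtain ⟨i, x, y, _, heq⟩ := claim1 κ p
      rw [heq]
      exact ⟨i, by rw [Sym2.map_pair_eq, hpr, hpr]⟩
    · rintro ⟨i, hi⟩
      induction e using Sym2.ind with
      | _ u u' =>
        obtain ⟨vu, ku, rfl⟩ := hsurj u
        obtain ⟨vu', ku', rfl⟩ := hsurj u'
        rw [Sym2.map_pair_eq, hpr, hpr, Sym2.eq_iff] at hi
        rcases hi with ⟨h1, h2⟩ | ⟨h1, h2⟩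
        · obtain ⟨⟨κ, p⟩, hz, _⟩ := hmatch i ku ku'
          rcases hz with ⟨hA1, hA2, hB1, hB2⟩ | ⟨hA1, hA2, hB1, hB2⟩
          · refine ⟨κ, p, ?_⟩
            show _ = s(emb (g (A κ p)) (B κ p), emb (g (A κ (p+1))) (B κ (p+1)))
            rw [hA1, hA2, hB1, hB2, h1, h2]
          · refine ⟨κ, p, ?_⟩
            show _ = s(emb (g (A κ p)) (B κ p), emb (g (A κ (p+1))) (B κ (p+1)))
            rw [hA1, hA2, hB1, hB2, h1, h2]; exact Sym2.eq_swap
        · obtain ⟨⟨κ, p⟩, hz, _⟩ := hmatch i ku' ku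
          rcases hz with ⟨hA1, hA2, hB1, hB2⟩ | ⟨hA1, hA2, hB1, hB2⟩
          · refine ⟨κ, p, ?_⟩
            show _ = s(emb (g (A κ p)) (B κ p), emb (g (A κ (p+1))) (B κ (p+1)))
            rw [hA1, hA2, hB1, hB2, h1, h2]; exact Sym2.eq_swap
          · refine ⟨κ, p, ?_⟩
            show _ = s(emb (g (A κ p)) (B κ p), emb (g (A κ (p+1))) (B κ (p+1)))
            rw [hA1, hA2, hB1, hB2, h1, h2]
  · rintro C ⟨κ, rfl⟩ C' ⟨κ', rfl⟩ hne
    simp only [Function.onFun, id_eq]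
    rw [Set.disjoint_left]
    rintro e ⟨p, rfl⟩ ⟨p', heq'⟩
    obtain ⟨i, x, y, hd, he⟩ := claim1 κ p
    obtain ⟨i', x', y', hd', he'⟩ := claim1 κ' p'
    rw [he] at heq'
    rw [he'] at heq'
    rw [Sym2.eq_iff] at heq'
    have : i = i' ∧ x = x' ∧ y = y' := by
      rcases heq' with ⟨h1, h2⟩ | ⟨h1, h2⟩
      · obtain ⟨hv, hk⟩ := hembinj _ _ _ _ h1
        obtain ⟨hv', hk'⟩ := hembinj _ _ _ _ h2
        exact ⟨ginj hv, hk, hk'⟩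
      · obtain ⟨hv, hk⟩ := hembinj _ _ _ _ h1
        obtain ⟨hv', hk'⟩ := hembinj _ _ _ _ h2
        have hii : i = i' + 1 := ginj hv
        have hii' : i + 1 = i' := ginj hv'
        exact absurd (by rw [show i' + 2 = i' + 1 + 1 by ring, ← hii]; exact hii') (htwo i')
    obtain ⟨rfl, rfl, rfl⟩ := this
    have hu := (hmatch i x y).unique (y₁ := (κ, p)) (y₂ := (κ', p')) hd hd'
    apply hne
    rw [Prod.ext_iff] at hu
    simp only []
    rw [show κ = κ' from hu.1]

end CycleLemmas

theorem stmt_7 (r s t : ℕ) (hr : 0 < r) (hs : 0 < s) (ht : 0 < t)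
    (h : HasCycleDecomp (completeTripartiteGraph r s t) {3, 5}) :
    HasCycleDecomp (completeTripartiteGraph (5 * r) (5 * s) (5 * t)) {5} := by
  classical
  obtain ⟨D, hD1, hD2, hD3⟩ := h
  set G : SimpleGraph (Σ i : Fin 3, Fin (![r, s, t] i)) := completeTripartiteGraph r s t with hG
  set G' : SimpleGraph (Σ i : Fin 3, Fin (![5*r, 5*s, 5*t] i)) :=
    completeTripartiteGraph (5*r) (5*s) (5*t) with hG'
  have hN : ∀ i : Fin 3, ![5*r, 5*s, 5*t] i = 5 * ![r, s, t] i := by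
    intro i; fin_cases i <;> rfl
  -- projection and embedding
  let pr : (Σ i : Fin 3, Fin (![5*r, 5*s, 5*t] i)) → (Σ i : Fin 3, Fin (![r, s, t] i)) :=
    fun u => ⟨u.1, ⟨u.2.val / 5, by have h1 := u.2.isLt; have h2 := hN u.1; omega⟩⟩
  let emb : (Σ i : Fin 3, Fin (![r, s, t] i)) → ZMod 5 → (Σ i : Fin 3, Fin (![5*r, 5*s, 5*t] i)) :=
    fun v k => ⟨v.1, ⟨5 * v.2.val + k.val, by
      have h1 := v.2.isLt; have h2 : k.val < 5 := k.val_lt; have h3 := hN v.1; omega⟩⟩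
  have hembinj : ∀ v k v' k', emb v k = emb v' k' → v = v' ∧ k = k' := by
    rintro ⟨i, x⟩ k ⟨i', x'⟩ k' heq
    obtain ⟨hi, hx⟩ := Sigma.mk.inj_iff.mp heq
    subst hi
    have hx' : (5 * x.val + k.val : ℕ) = 5 * x'.val + k'.val := by
      have := eq_of_heq hx
      exact Fin.val_eq_of_eq this
    have hk5 : k.val < 5 := k.val_lt
    have hk5' : k'.val < 5 := k'.val_lt
    have hxx : x.val = x'.val := by omega
    have hkk : k.val = k'.val := by omega
    refine ⟨by rw [Fin.val_inj] at hxx; rw [hxx], ?_⟩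
    exact ZMod.val_injective 5 hkk
  have hsurj : ∀ u, ∃ v k, u = emb v k := by
    rintro ⟨i, x⟩
    refine ⟨⟨i, ⟨x.val / 5, by have h1 := x.isLt; have h2 := hN i; omega⟩⟩,
      ((x.val % 5 : ℕ) : ZMod 5), ?_⟩
    show (⟨i, x⟩ : Σ i : Fin 3, Fin (![5*r, 5*s, 5*t] i)) = ⟨i, ⟨_, _⟩⟩
    congr 1
    apply Fin.ext
    show x.val = 5 * (x.val / 5) + ((x.val % 5 : ℕ) : ZMod 5).val
    rw [ZMod.val_natCast]
    omega
  have hpr : ∀ v k, pr (emb v k) = v := by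
    rintro ⟨i, x⟩ k
    show (⟨i, ⟨(5 * x.val + k.val) / 5, _⟩⟩ : Σ i : Fin 3, Fin (![r, s, t] i)) = ⟨i, x⟩
    congr 1
    apply Fin.ext
    show (5 * x.val + k.val) / 5 = x.val
    have : k.val < 5 := k.val_lt
    omega
  have hadj : ∀ u u', G'.Adj u u' ↔ G.Adj (pr u) (pr u') := by
    rintro ⟨i, x⟩ ⟨i', x'⟩
    show (completeTripartiteGraph _ _ _).Adj _ _ ↔ (completeTripartiteGraph _ _ _).Adj _ _
    simp only [completeTripartiteGraph, comap_adj, top_adj]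
    exact Iff.rfl
  have htwo3 : ∀ i : ZMod 3, i + 2 ≠ i := by decide
  have htwo5 : ∀ i : ZMod 5, i + 2 ≠ i := by decide
  -- the per-piece blow-up
  have main : ∀ E ∈ D, ∃ F : Set (Set (Sym2 (Σ i : Fin 3, Fin (![5*r, 5*s, 5*t] i)))),
      (∀ C ∈ F, ∃ (u : _) (w : G'.Walk u u), w.IsCycle ∧ w.length = 5 ∧ C = {e | e ∈ w.edges}) ∧
      ⋃₀ F = {e | Sym2.map pr e ∈ E} ∧ F.PairwiseDisjoint id := by
    intro E hE
    obtain ⟨v, w, hw, hlen, rfl⟩ := hD1 E hE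
    simp only [Set.mem_insert_iff, Set.mem_singleton_iff] at hlen
    rcases hlen with h3 | h5
    · -- triangle
      obtain ⟨g, ginj, gadj, hEg⟩ := extract3 w hw h3
      simp only [hEg]
      refine blowup_s7 (K := ZMod 3 × ZMod 5) pr emb hembinj hsurj hpr hadj g ginj gadj htwo3
        (fun κ p => κ.1 + trioP p) (fun κ p => κ.2 + trioX p)
        (fun κ p p' h1 h2 => trio_inj p p'
          (add_left_cancel (show κ.1 + trioP p = κ.1 + trioP p' from h1))
          (add_left_cancel (show κ.2 + trioX p = κ.2 + trioX p' from h2)))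
        (fun κ p => ?_) trio_match
      obtain ⟨d, hd | hd⟩ := trio_cons p
      · refine ⟨κ.1 + d, Or.inl ⟨?_, ?_⟩⟩
        · show κ.1 + trioP p = κ.1 + d
          rw [hd.1]
        · show κ.1 + trioP (p + 1) = κ.1 + d + 1
          rw [hd.2]; ring
      · refine ⟨κ.1 + d, Or.inr ⟨?_, ?_⟩⟩
        · show κ.1 + trioP p = κ.1 + d + 1
          rw [hd.1]; ring
        · show κ.1 + trioP (p + 1) = κ.1 + d
          rw [hd.2]
    · -- pentagon
      obtain ⟨g, ginj, gadj, hEg⟩ := extract5 w hw h5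
      simp only [hEg]
      exact blowup_s7 (K := ZMod 5 × ZMod 5) pr emb hembinj hsurj hpr hadj g ginj gadj htwo5
        (fun κ p => p) (fun κ p => κ.1 + κ.2 * p)
        (fun κ p p' h1 _ => h1)
        (fun κ p => ⟨p, Or.inl ⟨rfl, rfl⟩⟩)
        penta_match
  choose F hF1 hF2 hF3 using main
  -- edge correspondence
  have hedge : ∀ e, e ∈ G'.edgeSet ↔ Sym2.map pr e ∈ G.edgeSet := by
    intro e
    induction e using Sym2.ind with
    | _ u u' => rw [Sym2.map_pair_eq, mem_edgeSet, mem_edgeSet, hadj]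
  refine ⟨{C | ∃ E, ∃ hE : E ∈ D, C ∈ F E hE}, ?_, ?_, ?_⟩
  · rintro C ⟨E, hE, hC⟩
    obtain ⟨u, w, hw1, hw2, hw3⟩ := hF1 E hE C hC
    exact ⟨u, w, hw1, by rw [hw2]; exact rfl, hw3⟩
  · ext e
    simp only [Set.mem_sUnion, Set.mem_setOf_eq]
    constructor
    · rintro ⟨C, ⟨E, hE, hC⟩, heC⟩
      have : e ∈ ⋃₀ F E hE := ⟨C, hC, heC⟩
      rw [hF2 E hE] at this
      rw [hedge]
      rw [← hD2]
      exact ⟨E, hE, this⟩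
    · intro he
      rw [hedge, ← hD2] at he
      obtain ⟨E, hE, heE⟩ := he
      have : e ∈ ⋃₀ F E hE := by rw [hF2 E hE]; exact heE
      obtain ⟨C, hC, heC⟩ := this
      exact ⟨C, ⟨E, hE, hC⟩, heC⟩
  · rintro C ⟨E, hE, hC⟩ C' ⟨E', hE', hC'⟩ hne
    by_cases hEE : E = E'
    · subst hEE
      exact hF3 E hE hC hC' hne
    · simp only [Function.onFun, id_eq]
      rw [Set.disjoint_left]
      intro e heC heC'
      have h1 : e ∈ ⋃₀ F E hE := ⟨C, hC, heC⟩
      have h2 : e ∈ ⋃₀ F E' hE' := ⟨C', hC', heC'⟩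
      rw [hF2 E hE] at h1
      rw [hF2 E' hE'] at h2
      exact Set.disjoint_left.mp (hD3 hE hE' hEE) h1 h2
end

section
/- Let G be a finite simple graph that admits a decomposition into triangles and 5-cycles. Then the 5-blowup B_5(G) admits a 5-cycle decomposition. -/
open SimpleGraph

/-- The `k`-blowup of `G`: vertices are pairs `(u, i)` with `i ∈ Fin k`, and
`(u, i)` is adjacent to `(v, j)` iff `u` is adjacent to `v` in `G`. -/
def blowup {V : Type*} (G : SimpleGraph V) (k : ℕ) : SimpleGraph (V × Fin k) :=
  G.comap Prod.fst

section Aux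

variable {V : Type*} {G : SimpleGraph V}

/-- Build a 5-cycle from 5 distinct vertices forming a closed path. -/
lemma exists_pentagon {W : Type*} (H : SimpleGraph W) (v0 v1 v2 v3 v4 : W)
    (h01 : H.Adj v0 v1) (h12 : H.Adj v1 v2) (h23 : H.Adj v2 v3)
    (h34 : H.Adj v3 v4) (h40 : H.Adj v4 v0)
    (d02 : v0 ≠ v2) (d03 : v0 ≠ v3) (d13 : v1 ≠ v3) (d14 : v1 ≠ v4) (d24 : v2 ≠ v4) :
    ∃ (v : W) (w : H.Walk v v), w.IsCycle ∧ w.length = 5 ∧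
      {e | e ∈ w.edges} = ({s(v0,v1), s(v1,v2), s(v2,v3), s(v3,v4), s(v4,v0)} : Set (Sym2 W)) := by
  refine ⟨v0, .cons h01 (.cons h12 (.cons h23 (.cons h34 (.cons h40 .nil)))), ?_, by simp, ?_⟩
  · have d01 := h01.ne; have d12 := h12.ne; have d23 := h23.ne; have d34 := h34.ne
    have d40 := h40.ne
    refine ⟨⟨?_, by simp⟩, ?_⟩
    · constructor
      simp [Sym2.eq_iff]
      aesop
    · simp [Walk.support_cons]
      aesop
  · ext e; simp [Set.mem_insert_iff]

lemma walk_len3 {v : V} (w : G.Walk v v) (h : w.length = 3) :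
    ∃ (b c : V) (h1 : G.Adj v b) (h2 : G.Adj b c) (h3 : G.Adj c v),
      w = .cons h1 (.cons h2 (.cons h3 .nil)) := by
  cases w with
  | nil => simp at h
  | cons h1 p =>
  cases p with
  | nil => simp at h
  | cons h2 q =>
  cases q with
  | nil => simp at h
  | cons h3 r =>
  cases r with
  | nil => exact ⟨_, _, h1, h2, h3, rfl⟩
  | cons h4 s => simp [Walk.length_cons] at h

lemma walk_len5 {v : V} (w : G.Walk v v) (h : w.length = 5) :
    ∃ (b c d e : V) (h1 : G.Adj v b) (h2 : G.Adj b c) (h3 : G.Adj c d)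
      (h4 : G.Adj d e) (h5 : G.Adj e v),
      w = .cons h1 (.cons h2 (.cons h3 (.cons h4 (.cons h5 .nil)))) := by
  cases w with
  | nil => simp at h
  | cons h1 p =>
  cases p with
  | nil => simp at h
  | cons h2 q =>
  cases q with
  | nil => simp at h
  | cons h3 r =>
  cases r with
  | nil => simp at h
  | cons h4 s =>
  cases s with
  | nil => simp at h
  | cons h5 t =>
  cases t with
  | nil => exact ⟨_, _, _, _, h1, h2, h3, h4, h5, rfl⟩
  | cons h6 u => simp [Walk.length_cons] at h

lemma mem_blowup_edgeSet {f : Sym2 (V × Fin 5)} :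
    f ∈ (blowup G 5).edgeSet ↔ Sym2.map Prod.fst f ∈ G.edgeSet := by
  induction f using Sym2.ind with
  | _ p q => simp [blowup]

lemma eq_pair_of_map_fst {a b : V} {f : Sym2 (V × Fin 5)}
    (h : Sym2.map Prod.fst f = s(a,b)) : ∃ i j : Fin 5, f = s((a,i),(b,j)) := by
  induction f using Sym2.ind with
  | _ p q =>
    rw [Sym2.map_pair_eq, Sym2.eq_iff] at h
    obtain ⟨p1, p2⟩ := p; obtain ⟨q1, q2⟩ := q
    rcases h with ⟨h1, h2⟩ | ⟨h1, h2⟩ <;> subst h1 <;> subst h2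
    · exact ⟨p2, q2, rfl⟩
    · exact ⟨q2, p2, Sym2.eq_swap⟩

/-! ### Triangle pieces -/

def tri0 (a b c : V) (i : Fin 5) : Set (Sym2 (V × Fin 5)) :=
  {s((a,i),(b,i+1)), s((b,i+1),(c,i+3)), s((c,i+3),(a,i+1)), s((a,i+1),(b,i)), s((b,i),(a,i))}

lemma mem_tri0 {a b c : V} {i : Fin 5} {f : Sym2 (V × Fin 5)} :
    f ∈ tri0 a b c i ↔ f = s((a,i),(b,i+1)) ∨ f = s((b,i+1),(c,i+3)) ∨ f = s((c,i+3),(a,i+1))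
      ∨ f = s((a,i+1),(b,i)) ∨ f = s((b,i),(a,i)) := by
  simp [tri0]

set_option maxHeartbeats 1000000 in
lemma tri0_same {a b c : V} (hab : a ≠ b) (hbc : b ≠ c) (hac : a ≠ c)
    {i i' : Fin 5} {f : Sym2 (V × Fin 5)} (h1 : f ∈ tri0 a b c i) (h2 : f ∈ tri0 a b c i') :
    i = i' := by
  have hba := hab.symm; have hcb := hbc.symm; have hca := hac.symm
  rw [mem_tri0] at h1 h2
  rcases h1 with rfl|rfl|rfl|rfl|rfl <;> rcases h2 with h2|h2|h2|h2|h2 <;>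
    rw [Sym2.eq_iff] at h2 <;> simp only [Prod.mk.injEq] at h2 <;>
    rcases h2 with ⟨⟨e1,e2⟩,e3,e4⟩|⟨⟨e1,e2⟩,e3,e4⟩ <;>
    first
      | exact absurd e1 (by assumption)
      | exact absurd e3 (by assumption)
      | omega

set_option maxHeartbeats 1000000 in
lemma tri0_cross {a b c : V} (hab : a ≠ b) (hbc : b ≠ c) (hac : a ≠ c)
    {i i' : Fin 5} {f : Sym2 (V × Fin 5)} (h1 : f ∈ tri0 a b c i) (h2 : f ∈ tri0 b c a i') :
    False := by
  have hba := hab.symm; have hcb := hbc.symm; have hca := hac.symm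
  rw [mem_tri0] at h1 h2
  rcases h1 with rfl|rfl|rfl|rfl|rfl <;> rcases h2 with h2|h2|h2|h2|h2 <;>
    rw [Sym2.eq_iff] at h2 <;> simp only [Prod.mk.injEq] at h2 <;>
    rcases h2 with ⟨⟨e1,e2⟩,e3,e4⟩|⟨⟨e1,e2⟩,e3,e4⟩ <;>
    first
      | exact absurd e1 (by assumption)
      | exact absurd e3 (by assumption)
      | omega

def triD (a b c : V) : Set (Set (Sym2 (V × Fin 5))) :=
  Set.range (tri0 a b c) ∪ Set.range (tri0 b c a) ∪ Set.range (tri0 c a b)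

lemma triD_rot {a b c : V} : triD a b c = triD b c a := by
  ext S; simp only [triD, Set.mem_union, Set.mem_range]; tauto

lemma tri_cover {a b c : V} (i j : Fin 5) :
    ∃ S ∈ triD a b c, (s((a,i),(b,j)) : Sym2 (V × Fin 5)) ∈ S := by
  have hd : j = i + 0 ∨ j = i + 1 ∨ j = i + 2 ∨ j = i + 3 ∨ j = i + 4 := by omega
  rcases hd with rfl | rfl | rfl | rfl | rfl
  · refine ⟨tri0 a b c i, Or.inl (Or.inl ⟨i, rfl⟩), mem_tri0.mpr (Or.inr (Or.inr (Or.inr (Or.inr ?_))))⟩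
    rw [show i + 0 = i from by omega]
    exact Sym2.eq_swap
  · exact ⟨tri0 a b c i, Or.inl (Or.inl ⟨i, rfl⟩), mem_tri0.mpr (Or.inl rfl)⟩
  · refine ⟨tri0 c a b (i+4), Or.inr ⟨i+4, rfl⟩, mem_tri0.mpr (Or.inr (Or.inl ?_))⟩
    rw [show i+4+1 = i from by omega, show i+4+3 = i+2 from by omega]
  · refine ⟨tri0 b c a (i+2), Or.inl (Or.inr ⟨i+2, rfl⟩), mem_tri0.mpr (Or.inr (Or.inr (Or.inl ?_)))⟩
    rw [show i+2+3 = i from by omega, show i+2+1 = i+3 from by omega]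
  · refine ⟨tri0 a b c (i+4), Or.inl (Or.inl ⟨i+4, rfl⟩), mem_tri0.mpr (Or.inr (Or.inr (Or.inr (Or.inl ?_))))⟩
    rw [show i+4+1 = i from by omega]

lemma tri0_cycle (hab : G.Adj a b) (hbc : G.Adj b c) (hca : G.Adj c a) (hac : a ≠ c) (k : Fin 5) :
    ∃ (v : V × Fin 5) (w : (blowup G 5).Walk v v), w.IsCycle ∧ w.length = 5 ∧
      tri0 a b c k = {e | e ∈ w.edges} := by
  obtain ⟨v, w, hc, hl, he⟩ := exists_pentagon (blowup G 5) (a,k) (b,k+1) (c,k+3) (a,k+1) (b,k)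
    hab hbc hca hab hab.symm
    (fun h => hac (congrArg Prod.fst h))
    (fun h => (by omega : k ≠ k + 1) (congrArg Prod.snd h))
    (fun h => hab.ne.symm (congrArg Prod.fst h))
    (fun h => (by omega : k + 1 ≠ k) (congrArg Prod.snd h))
    (fun h => hbc.ne.symm (congrArg Prod.fst h))
  exact ⟨v, w, hc, hl, by rw [he]; rfl⟩

lemma tri_piece {a b c : V} (hab : G.Adj a b) (hbc : G.Adj b c) (hca : G.Adj c a)
    (hac : a ≠ c) :
    ∃ DE : Set (Set (Sym2 (V × Fin 5))),
      (∀ S ∈ DE, ∃ (v : V × Fin 5) (w : (blowup G 5).Walk v v),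
        w.IsCycle ∧ w.length = 5 ∧ S = {e | e ∈ w.edges}) ∧
      ⋃₀ DE = {f | Sym2.map Prod.fst f ∈ ({s(a,b), s(b,c), s(c,a)} : Set (Sym2 V))} ∧
      DE.PairwiseDisjoint id := by
  have h1 := hab.ne
  have h2 := hbc.ne
  refine ⟨triD a b c, ?_, ?_, ?_⟩
  · rintro S ((⟨k, rfl⟩ | ⟨k, rfl⟩) | ⟨k, rfl⟩)
    · obtain ⟨v, w, x, y, z⟩ := tri0_cycle hab hbc hca hac k
      exact ⟨v, w, x, y, z⟩
    · obtain ⟨v, w, x, y, z⟩ := tri0_cycle hbc hca hab hab.ne.symm k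
      exact ⟨v, w, x, y, z⟩
    · obtain ⟨v, w, x, y, z⟩ := tri0_cycle hca hab hbc hbc.ne.symm k
      exact ⟨v, w, x, y, z⟩
  · ext f
    simp only [Set.mem_sUnion, Set.mem_setOf_eq]
    constructor
    · rintro ⟨S, hS, hf⟩
      rcases hS with ((⟨k, rfl⟩ | ⟨k, rfl⟩) | ⟨k, rfl⟩) <;>
        rcases mem_tri0.mp hf with rfl|rfl|rfl|rfl|rfl <;>
        simp only [Sym2.map_pair_eq, Set.mem_insert_iff, Set.mem_singleton_iff, Sym2.eq_iff] <;> tauto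
    · intro hf
      simp only [Set.mem_insert_iff, Set.mem_singleton_iff] at hf
      rcases hf with hf | hf | hf
      · obtain ⟨i, j, rfl⟩ := eq_pair_of_map_fst hf
        exact tri_cover i j
      · obtain ⟨i, j, rfl⟩ := eq_pair_of_map_fst hf
        obtain ⟨S, hS, hfS⟩ := tri_cover (a := b) (b := c) (c := a) i j
        exact ⟨S, by rw [triD_rot]; exact hS, hfS⟩
      · obtain ⟨i, j, rfl⟩ := eq_pair_of_map_fst hf
        obtain ⟨S, hS, hfS⟩ := tri_cover (a := c) (b := a) (c := b) i j
        exact ⟨S, by rw [triD_rot, triD_rot]; exact hS, hfS⟩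
  · intro S hS S' hS' hne
    show Disjoint S S'
    rw [Set.disjoint_left]
    intro f hf hf'
    have hba := h1.symm; have hcb := h2.symm; have hca' := hac.symm
    rcases hS with ((⟨k, rfl⟩ | ⟨k, rfl⟩) | ⟨k, rfl⟩) <;>
      rcases hS' with ((⟨k', rfl⟩ | ⟨k', rfl⟩) | ⟨k', rfl⟩)
    · exact hne (by rw [tri0_same h1 h2 hac hf hf'])
    · exact tri0_cross h1 h2 hac hf hf'
    · exact tri0_cross hca' h1 hcb hf' hf
    · exact tri0_cross h1 h2 hac hf' hf
    · exact hne (by rw [tri0_same h2 hca' hba hf hf'])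
    · exact tri0_cross h2 hca' hba hf hf'
    · exact tri0_cross hca' h1 hcb hf hf'
    · exact tri0_cross h2 hca' hba hf' hf
    · exact hne (by rw [tri0_same hca' h1 hcb hf hf'])

/-! ### Pentagon pieces -/

def pent0 (v1 v2 v3 v4 v5 : V) (x y : Fin 5) : Set (Sym2 (V × Fin 5)) :=
  {s((v1,x),(v2,x+y)), s((v2,x+y),(v3,x+y+y)), s((v3,x+y+y),(v4,x+y+y+y)),
   s((v4,x+y+y+y),(v5,x+y+y+y+y)), s((v5,x+y+y+y+y),(v1,x))}

lemma mem_pent0 {v1 v2 v3 v4 v5 : V} {x y : Fin 5} {f : Sym2 (V × Fin 5)} :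
    f ∈ pent0 v1 v2 v3 v4 v5 x y ↔ f = s((v1,x),(v2,x+y)) ∨ f = s((v2,x+y),(v3,x+y+y))
      ∨ f = s((v3,x+y+y),(v4,x+y+y+y)) ∨ f = s((v4,x+y+y+y),(v5,x+y+y+y+y))
      ∨ f = s((v5,x+y+y+y+y),(v1,x)) := by
  simp [pent0]

set_option maxHeartbeats 1000000 in
lemma pent0_inj {v1 v2 v3 v4 v5 : V}
    (n12 : v1 ≠ v2) (n13 : v1 ≠ v3) (n14 : v1 ≠ v4) (n15 : v1 ≠ v5)
    (n23 : v2 ≠ v3) (n24 : v2 ≠ v4) (n25 : v2 ≠ v5)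
    (n34 : v3 ≠ v4) (n35 : v3 ≠ v5) (n45 : v4 ≠ v5)
    {x y x' y' : Fin 5} {f : Sym2 (V × Fin 5)}
    (h1 : f ∈ pent0 v1 v2 v3 v4 v5 x y) (h2 : f ∈ pent0 v1 v2 v3 v4 v5 x' y') :
    x = x' ∧ y = y' := by
  have n21 := n12.symm; have n31 := n13.symm; have n41 := n14.symm; have n51 := n15.symm
  have n32 := n23.symm; have n42 := n24.symm; have n52 := n25.symm
  have n43 := n34.symm; have n53 := n35.symm; have n54 := n45.symm
  rw [mem_pent0] at h1 h2
  rcases h1 with rfl|rfl|rfl|rfl|rfl <;> rcases h2 with h2|h2|h2|h2|h2 <;>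
    rw [Sym2.eq_iff] at h2 <;> simp only [Prod.mk.injEq] at h2 <;>
    rcases h2 with ⟨⟨e1,e2⟩,e3,e4⟩|⟨⟨e1,e2⟩,e3,e4⟩ <;>
    first
      | exact absurd e1 (by assumption)
      | exact absurd e3 (by assumption)
      | omega

lemma pent_piece {v1 v2 v3 v4 v5 : V}
    (h12 : G.Adj v1 v2) (h23 : G.Adj v2 v3) (h34 : G.Adj v3 v4) (h45 : G.Adj v4 v5)
    (h51 : G.Adj v5 v1)
    (n13 : v1 ≠ v3) (n14 : v1 ≠ v4) (n24 : v2 ≠ v4) (n25 : v2 ≠ v5) (n35 : v3 ≠ v5) :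
    ∃ DE : Set (Set (Sym2 (V × Fin 5))),
      (∀ S ∈ DE, ∃ (v : V × Fin 5) (w : (blowup G 5).Walk v v),
        w.IsCycle ∧ w.length = 5 ∧ S = {e | e ∈ w.edges}) ∧
      ⋃₀ DE = {f | Sym2.map Prod.fst f ∈
        ({s(v1,v2), s(v2,v3), s(v3,v4), s(v4,v5), s(v5,v1)} : Set (Sym2 V))} ∧
      DE.PairwiseDisjoint id := by
  have n12 := h12.ne; have n23 := h23.ne; have n34 := h34.ne; have n45 := h45.ne
  have n15 := h51.ne.symm
  refine ⟨{S | ∃ x y : Fin 5, S = pent0 v1 v2 v3 v4 v5 x y}, ?_, ?_, ?_⟩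
  · rintro S ⟨x, y, rfl⟩
    obtain ⟨v, w, hc, hl, he⟩ := exists_pentagon (blowup G 5)
      (v1,x) (v2,x+y) (v3,x+y+y) (v4,x+y+y+y) (v5,x+y+y+y+y)
      h12 h23 h34 h45 h51
      (fun h => n13 (congrArg Prod.fst h))
      (fun h => n14 (congrArg Prod.fst h))
      (fun h => n24 (congrArg Prod.fst h))
      (fun h => n25 (congrArg Prod.fst h))
      (fun h => n35 (congrArg Prod.fst h))
    exact ⟨v, w, hc, hl, by rw [he]; rfl⟩
  · ext f
    simp only [Set.mem_sUnion, Set.mem_setOf_eq]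
    constructor
    · rintro ⟨S, ⟨x, y, rfl⟩, hf⟩
      rcases mem_pent0.mp hf with rfl|rfl|rfl|rfl|rfl <;>
        simp only [Sym2.map_pair_eq, Set.mem_insert_iff, Set.mem_singleton_iff,
          Sym2.eq_iff] <;> tauto
    · intro hf
      simp only [Set.mem_insert_iff, Set.mem_singleton_iff] at hf
      rcases hf with hf | hf | hf | hf | hf
      · obtain ⟨i, j, rfl⟩ := eq_pair_of_map_fst hf
        refine ⟨pent0 v1 v2 v3 v4 v5 i (j-i), ⟨i, j-i, rfl⟩, mem_pent0.mpr (Or.inl ?_)⟩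
        rw [show i + (j-i) = j from by omega]
      · obtain ⟨i, j, rfl⟩ := eq_pair_of_map_fst hf
        refine ⟨pent0 v1 v2 v3 v4 v5 (i-(j-i)) (j-i), ⟨i-(j-i), j-i, rfl⟩,
          mem_pent0.mpr (Or.inr (Or.inl ?_))⟩
        rw [show i-(j-i) + (j-i) + (j-i) = j from by omega,
          show i-(j-i) + (j-i) = i from by omega]
      · obtain ⟨i, j, rfl⟩ := eq_pair_of_map_fst hf
        refine ⟨pent0 v1 v2 v3 v4 v5 (i-(j-i)-(j-i)) (j-i), ⟨i-(j-i)-(j-i), j-i, rfl⟩,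
          mem_pent0.mpr (Or.inr (Or.inr (Or.inl ?_)))⟩
        rw [show i-(j-i)-(j-i) + (j-i) + (j-i) + (j-i) = j from by omega,
          show i-(j-i)-(j-i) + (j-i) + (j-i) = i from by omega]
      · obtain ⟨i, j, rfl⟩ := eq_pair_of_map_fst hf
        refine ⟨pent0 v1 v2 v3 v4 v5 (i-(j-i)-(j-i)-(j-i)) (j-i), ⟨i-(j-i)-(j-i)-(j-i), j-i, rfl⟩,
          mem_pent0.mpr (Or.inr (Or.inr (Or.inr (Or.inl ?_))))⟩
        rw [show i-(j-i)-(j-i)-(j-i) + (j-i) + (j-i) + (j-i) + (j-i) = j from by omega,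
          show i-(j-i)-(j-i)-(j-i) + (j-i) + (j-i) + (j-i) = i from by omega]
      · obtain ⟨i, j, rfl⟩ := eq_pair_of_map_fst hf
        refine ⟨pent0 v1 v2 v3 v4 v5 j (j-i), ⟨j, j-i, rfl⟩,
          mem_pent0.mpr (Or.inr (Or.inr (Or.inr (Or.inr ?_))))⟩
        rw [show j + (j-i) + (j-i) + (j-i) + (j-i) = i from by omega]
  · rintro S ⟨x, y, rfl⟩ S' ⟨x', y', rfl⟩ hne
    show Disjoint _ _
    rw [Set.disjoint_left]
    intro f hf hf'
    obtain ⟨rfl, rfl⟩ := pent0_inj n12 n13 n14 n15 n23 n24 n25 n34 n35 n45 hf hf'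
    exact hne rfl

end Aux

theorem stmt_8 {V : Type*} [Fintype V] (G : SimpleGraph V)
    (h : HasCycleDecomp G {3, 5}) :
    HasCycleDecomp (blowup G 5) {5} := by
  obtain ⟨D, hD1, hD2, hD3⟩ := h
  have key : ∀ E ∈ D, ∃ DE : Set (Set (Sym2 (V × Fin 5))),
      (∀ S ∈ DE, ∃ (v : V × Fin 5) (w : (blowup G 5).Walk v v),
        w.IsCycle ∧ w.length = 5 ∧ S = {e | e ∈ w.edges}) ∧
      ⋃₀ DE = {f | Sym2.map Prod.fst f ∈ E} ∧ DE.PairwiseDisjoint id := by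
    intro E hE
    obtain ⟨v, w, hcyc, hlen, rfl⟩ := hD1 E hE
    have hlen' : w.length = 3 ∨ w.length = 5 := by simpa using hlen
    rcases hlen' with h3 | h5
    · obtain ⟨b, c, a1, a2, a3, rfl⟩ := walk_len3 w h3
      have hnd := hcyc.2
      simp only [Walk.support_cons, Walk.support_nil, List.tail_cons, List.nodup_cons,
        List.mem_cons, List.mem_singleton, List.not_mem_nil, or_false, not_or,
        List.nodup_nil, and_true] at hnd
      obtain ⟨⟨hbc, hbv⟩, hcv, -⟩ := hnd
      have hE' : {e | e ∈ (Walk.cons a1 (Walk.cons a2 (Walk.cons a3 Walk.nil))).edges}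
          = ({s(v,b), s(b,c), s(c,v)} : Set (Sym2 V)) := by
        ext f; simp [Walk.edges_cons]
      rw [hE']
      exact tri_piece a1 a2 a3 (Ne.symm hcv)
    · obtain ⟨b, c, d, e, a1, a2, a3, a4, a5, rfl⟩ := walk_len5 w h5
      have hnd := hcyc.2
      simp only [Walk.support_cons, Walk.support_nil, List.tail_cons, List.nodup_cons,
        List.mem_cons, List.mem_singleton, List.not_mem_nil, or_false, not_or,
        List.nodup_nil, and_true] at hnd
      obtain ⟨⟨hbc, hbd, hbe, hbv⟩, ⟨hcd, hce, hcv⟩, ⟨hde, hdv⟩, hev, -⟩ := hnd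
      have hE' : {e' | e' ∈ (Walk.cons a1 (Walk.cons a2 (Walk.cons a3 (Walk.cons a4
          (Walk.cons a5 Walk.nil))))).edges}
          = ({s(v,b), s(b,c), s(c,d), s(d,e), s(e,v)} : Set (Sym2 V)) := by
        ext f; simp [Walk.edges_cons]
      rw [hE']
      exact pent_piece a1 a2 a3 a4 a5 (Ne.symm hcv) (Ne.symm hdv) hbd hbe hce
  choose DE hDE1 hDE2 hDE3 using key
  refine ⟨{S | ∃ E, ∃ hE : E ∈ D, S ∈ DE E hE}, ?_, ?_, ?_⟩
  · rintro S ⟨E, hE, hS⟩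
    obtain ⟨v, w, hc, hl, he⟩ := hDE1 E hE S hS
    exact ⟨v, w, hc, by simp [hl], he⟩
  · ext f
    simp only [Set.mem_sUnion, Set.mem_setOf_eq]
    constructor
    · rintro ⟨S, ⟨E, hE, hS⟩, hf⟩
      have : f ∈ ⋃₀ DE E hE := ⟨S, hS, hf⟩
      rw [hDE2 E hE] at this
      rw [mem_blowup_edgeSet, ← hD2]
      exact ⟨E, hE, this⟩
    · intro hf
      rw [mem_blowup_edgeSet, ← hD2] at hf
      obtain ⟨E, hE, hfE⟩ := hf
      have : f ∈ ⋃₀ DE E hE := by rw [hDE2 E hE]; exact hfE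
      obtain ⟨S, hS, hfS⟩ := this
      exact ⟨S, ⟨E, hE, hS⟩, hfS⟩
  · rintro S ⟨E, hE, hS⟩ S' ⟨E', hE', hS'⟩ hne
    show Disjoint S S'
    by_cases hEE : E = E'
    · subst hEE
      exact hDE3 E hE hS hS' hne
    · rw [Set.disjoint_left]
      intro f hf hf'
      have m1 : Sym2.map Prod.fst f ∈ E := by
        have : f ∈ ⋃₀ DE E hE := ⟨S, hS, hf⟩
        rwa [hDE2 E hE] at this
      have m2 : Sym2.map Prod.fst f ∈ E' := by
        have : f ∈ ⋃₀ DE E' hE' := ⟨S', hS', hf'⟩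
        rwa [hDE2 E' hE'] at this
      exact Set.disjoint_left.mp (hD3 hE hE' hEE) m1 m2
end

section
/- Let r and s be odd integers with 18 ≤ r < s. Then: (a) there is no positive integer y such that y(r − 3) < s and y(r − 3) ≡ s − r − 1 (mod s); and (b) there is no positive integer y such that y(r − 3) < s and y(r − 3) ≡ r + 1 (mod s). -/
theorem stmt_12 (r s : ℤ) (hor : Odd r) (hos : Odd s) (hr : 18 ≤ r) (hrs : r < s) :
    (¬ ∃ y : ℤ, 0 < y ∧ y * (r - 3) < s ∧ y * (r - 3) ≡ s - r - 1 [ZMOD s]) ∧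
    (¬ ∃ y : ℤ, 0 < y ∧ y * (r - 3) < s ∧ y * (r - 3) ≡ r + 1 [ZMOD s]) := by
  obtain ⟨a, ha⟩ := hor
  obtain ⟨b, hb⟩ := hos
  have key : ∀ c : ℤ, 0 ≤ c → c < s → ∀ y : ℤ, 0 < y → y * (r - 3) < s →
      y * (r - 3) ≡ c [ZMOD s] → y * (r - 3) = c := by
    intro c hc0 hcs y hy hys h
    have hd := h.dvd
    have hge : 1 * (r - 3) ≤ y * (r - 3) := by
      apply mul_le_mul_of_nonneg_right (by omega) (by omega)
    have h0 : c - y * (r - 3) = 0 := by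
      apply Int.eq_zero_of_abs_lt_dvd hd
      rcases abs_cases (c - y * (r - 3)) with ⟨he, _⟩ | ⟨he, _⟩ <;> omega
    omega
  constructor
  · rintro ⟨y, hy, hys, h⟩
    have := key (s - r - 1) (by omega) (by omega) y hy hys h
    -- parity contradiction: y*(r-3) even, s-r-1 odd
    obtain ⟨k, hk⟩ : Even (y * (r - 3)) := by
      have : Even (r - 3) := by refine ⟨a - 1, by omega⟩
      exact this.mul_left y
    omega
  · rintro ⟨y, hy, hys, h⟩
    have heq := key (r + 1) (by omega) (by omega) y hy hys h
    -- y = 1 forced, then r - 3 = r + 1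
    have hy2 : y < 2 := by nlinarith
    have hy1 : y = 1 := by omega
    subst hy1
    simp at heq
    omega
end
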